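/- arXiv:2202.04347 — 3 statements merged into one kernel-verified Lean document; each statement's English description precedes it below -/
import Mathlib

section
/- Assume the KKT setup with dataset size m, that m·(p+1) ≤ (d+1)/3, that both labels occur (I^+ ≠ ∅ and I^− ≠ ∅), and that |I^+| ≥ c·m and |I^−| ≥ c·m for some c ∈ (0,1]. Set c' := m(p+1)/(d+1), η₁ := (p+1)/(d − m·p), η₂ := 2(c·c'+1)(d+1)/(m·c·(d − m·p)), and z := (η₁ + η₂) · Σ_{l=1}^m y_l x_l. Then for every i ∈ I^− we have N_θ(x_i + z) ≥ 1. -/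
/-!
By stationarity, the pre-activation of neuron `j` at `u` is `vⱼ Tⱼ(u)` with
`Tⱼ(u) = ∑ₗ λₗ yₗ sₗⱼ (⟪xₗ, u⟫ + 1)`. Near-orthogonality makes `Tⱼ(xᵣ)` equal to
`λᵣ yᵣ sᵣⱼ (d + 1)` up to `(p + 1) Lⱼ`, where `Lⱼ = ∑ₗ λₗ sₗⱼ`, and moving by `η ∑ₗ yₗ xₗ` raises
every `Tⱼ` by at least `η (d - m p) Lⱼ`. Summing the margin condition over the positive examples
gives `∑_{vⱼ > 0} vⱼ² (2 (p + 1) Lⱼ + β L⁺ⱼ) ≥ 2` with `β = 2 (d + 1) / (c m)` and `L⁺ⱼ` the part of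
`Lⱼ` carried by positive examples, and `η₁ + η₂` is exactly the `η` with
`η (d - m p) = 3 (p + 1) + β`. So the move adds at least `2` to the output of the neurons with
`vⱼ > 0` and lowers none of the others. If `λᵢ ≠ 0`, complementary slackness gives
`N(xᵢ) = -1`, hence `N(xᵢ + z) ≥ 1`; if `λᵢ = 0`, all moved pre-activations are nonnegative and
`N(xᵢ + z) ≥ 2`.
-/

open InnerProductSpace Finset

/-- A depth-2 ReLU network of width `k` with first-layer weights `w`, biases `b`
and second-layer weights `v`. -/
noncomputable def net {d k : ℕ} (w : Fin k → EuclideanSpace ℝ (Fin d))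
    (b v : Fin k → ℝ) (z : EuclideanSpace ℝ (Fin d)) : ℝ :=
  ∑ j, v j * max 0 (⟪w j, z⟫_ℝ + b j)

lemma mul_max_zero_mul_of_pos {v : ℝ} (hv : 0 < v) (t : ℝ) : v * max 0 (v * t) = v ^ 2 * max 0 t := by
  rw [sq, mul_assoc, mul_max_of_nonneg 0 t hv.le, mul_zero]

lemma mul_max_zero_mul_le_of_nonpos {v t t' : ℝ} (hv : v ≤ 0) (htt' : t ≤ t') :
    v * max 0 (v * t) ≤ v * max 0 (v * t') :=
  mul_le_mul_of_nonpos_left (max_le_max le_rfl (mul_le_mul_of_nonpos_left htt' hv)) hv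

lemma abs_sum_mul_sub_mul_diag_le {ι : Type*} [Fintype ι] [DecidableEq ι] {G : ι → ι → ℝ}
    {D q : ℝ} {r : ι} (hdiag : G r r = D) (hoff : ∀ l, l ≠ r → |G l r| ≤ q) (a : ι → ℝ) :
    |∑ l, a l * G l r - a r * D| ≤ q * ∑ l ∈ univ.erase r, |a l| := by
  rw [← add_sum_erase _ _ (mem_univ r), hdiag, add_sub_cancel_left, mul_sum]
  refine (abs_sum_le_sum_abs _ _).trans (sum_le_sum fun l hl => ?_)
  rw [abs_mul, mul_comm q]
  exact mul_le_mul_of_nonneg_left (hoff l (ne_of_mem_erase hl)) (abs_nonneg _)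

section KKTPreactivation

variable {ι κ E : Type*} [NormedAddCommGroup E] [InnerProductSpace ℝ E]
  {x : ι → E} {y lam : ι → ℝ} {s : ι → κ → ℝ} {D p : ℝ}

def dualMass (lam : ι → ℝ) (s : ι → κ → ℝ) (I : Finset ι) (j : κ) : ℝ :=
  ∑ l ∈ I, lam l * s l j

lemma dualMass_nonneg (hlam : ∀ l, 0 ≤ lam l) (hs : ∀ l j, 0 ≤ s l j) (I : Finset ι) (j : κ) :
    0 ≤ dualMass lam s I j :=
  sum_nonneg fun l _ => mul_nonneg (hlam l) (hs l j)

variable [Fintype ι]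

def kktPreact (x : ι → E) (y lam : ι → ℝ) (s : ι → κ → ℝ) (j : κ) (u : E) : ℝ :=
  ∑ l, lam l * y l * s l j * (⟪x l, u⟫_ℝ + 1)

lemma dualMass_le_dualMass_univ (hlam : ∀ l, 0 ≤ lam l) (hs : ∀ l j, 0 ≤ s l j)
    (I : Finset ι) (j : κ) : dualMass lam s I j ≤ dualMass lam s univ j :=
  sum_le_sum_of_subset_of_nonneg (subset_univ I) fun l _ _ => mul_nonneg (hlam l) (hs l j)

lemma abs_kktPreact_sub_le [DecidableEq ι] (hx : ∀ l, ⟪x l, x l⟫_ℝ = D) (hp0 : 0 ≤ p)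
    (hp : ∀ l r, l ≠ r → |⟪x l, x r⟫_ℝ| ≤ p) (hy : ∀ l, |y l| = 1) (hlam : ∀ l, 0 ≤ lam l)
    (hs : ∀ l j, 0 ≤ s l j) (r : ι) (j : κ) :
    |kktPreact x y lam s j (x r) - lam r * y r * s r j * (D + 1)| ≤
      (p + 1) * dualMass lam s univ j := by
  have hoff : ∀ l, l ≠ r → |⟪x l, x r⟫_ℝ + 1| ≤ p + 1 := fun l hl =>
    (abs_add_le _ _).trans (by rw [abs_one]; linarith [hp l r hl])
  have habs : ∀ l, |lam l * y l * s l j| = lam l * s l j := fun l => by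
    rw [abs_mul, abs_mul, hy l, abs_of_nonneg (hlam l), abs_of_nonneg (hs l j), mul_one]
  calc _ ≤ (p + 1) * ∑ l ∈ univ.erase r, |lam l * y l * s l j| :=
        abs_sum_mul_sub_mul_diag_le (G := fun l r => ⟪x l, x r⟫_ℝ + 1) (by rw [hx]) hoff _
    _ ≤ (p + 1) * dualMass lam s univ j := by
        simp only [habs]
        exact mul_le_mul_of_nonneg_left (dualMass_le_dualMass_univ hlam hs _ j) (by linarith)

lemma sub_card_mul_le_mul_sum_mul_inner (hx : ∀ l, ⟪x l, x l⟫_ℝ = D) (hp0 : 0 ≤ p)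
    (hp : ∀ l r, l ≠ r → |⟪x l, x r⟫_ℝ| ≤ p) (hy : ∀ l, |y l| = 1) (l : ι) :
    D - Fintype.card ι * p ≤ y l * ∑ t, y t * ⟪x l, x t⟫_ℝ := by
  classical
  have hgram := abs_sum_mul_sub_mul_diag_le (G := fun t r => ⟪x r, x t⟫_ℝ) (hx l)
    (fun t ht => hp l t (Ne.symm ht)) y
  have hcard : ∑ t ∈ univ.erase l, |y t| ≤ Fintype.card ι := by
    simp only [hy, sum_const, nsmul_one]
    exact_mod_cast card_erase_le
  have hyy : y l * y l = 1 := by rw [← abs_mul_abs_self, hy, one_mul]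
  set S := ∑ t, y t * ⟪x l, x t⟫_ℝ
  have hS : y l * S - D = y l * (S - y l * D) := by rw [mul_sub, ← mul_assoc, hyy, one_mul]
  have herr : |y l * (S - y l * D)| ≤ p * Fintype.card ι := by
    rw [abs_mul, hy, one_mul]; exact hgram.trans (mul_le_mul_of_nonneg_left hcard hp0)
  linarith [neg_abs_le (y l * (S - y l * D))]

lemma le_kktPreact_add_smul_sum (hx : ∀ l, ⟪x l, x l⟫_ℝ = D) (hp0 : 0 ≤ p)
    (hp : ∀ l r, l ≠ r → |⟪x l, x r⟫_ℝ| ≤ p) (hy : ∀ l, |y l| = 1) (hlam : ∀ l, 0 ≤ lam l)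
    (hs : ∀ l j, 0 ≤ s l j) {η : ℝ} (hη : 0 ≤ η) (j : κ) (u : E) :
    kktPreact x y lam s j u + η * ((D - Fintype.card ι * p) * dualMass lam s univ j) ≤
      kktPreact x y lam s j (u + η • ∑ t, y t • x t) := by
  have hsplit : kktPreact x y lam s j (u + η • ∑ t, y t • x t) = kktPreact x y lam s j u +
      η * ∑ l, lam l * s l j * (y l * ∑ t, y t * ⟪x l, x t⟫_ℝ) := by
    rw [kktPreact, kktPreact, mul_sum, ← sum_add_distrib]
    refine sum_congr rfl fun l _ => ?_
    simp only [inner_add_right, inner_smul_right, inner_sum]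
    ring
  rw [hsplit, dualMass, mul_sum]
  refine add_le_add_right (mul_le_mul_of_nonneg_left (sum_le_sum fun l _ => ?_) hη) _
  rw [mul_comm]
  exact mul_le_mul_of_nonneg_left (sub_card_mul_le_mul_sum_mul_inner hx hp0 hp hy l)
    (mul_nonneg (hlam l) (hs l j))

lemma neg_le_kktPreact_of_mul_eq_zero [DecidableEq ι] (hx : ∀ l, ⟪x l, x l⟫_ℝ = D) (hp0 : 0 ≤ p)
    (hp : ∀ l r, l ≠ r → |⟪x l, x r⟫_ℝ| ≤ p) (hy : ∀ l, |y l| = 1) (hlam : ∀ l, 0 ≤ lam l)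
    (hs : ∀ l j, 0 ≤ s l j) {r : ι} {j : κ} (hrj : lam r * s r j = 0) :
    -((p + 1) * dualMass lam s univ j) ≤ kktPreact x y lam s j (x r) := by
  have h := (abs_le.mp (abs_kktPreact_sub_le hx hp0 hp hy hlam hs r j)).1
  have hdiag : lam r * y r * s r j * (D + 1) = 0 := by linear_combination (y r * (D + 1)) * hrj
  rwa [hdiag, sub_zero] at h

end KKTPreactivation

lemma sum_mul_max_zero_mul_add_le {κ : Type*} [Fintype κ] {v t t' A : κ → ℝ}
    (hpos : ∀ j, 0 < v j → max 0 (t j) + A j ≤ t' j) (hnonpos : ∀ j, v j ≤ 0 → t j ≤ t' j) :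
    ∑ j, v j * max 0 (v j * t j) + ∑ j ∈ univ.filter (0 < v ·), v j ^ 2 * A j ≤
      ∑ j, v j * max 0 (v j * t' j) := by
  rw [sum_filter, ← sum_add_distrib]
  refine sum_le_sum fun j _ => ?_
  split_ifs with hv
  · rw [mul_max_zero_mul_of_pos hv, mul_max_zero_mul_of_pos hv, ← mul_add]
    exact mul_le_mul_of_nonneg_left ((hpos j hv).trans (le_max_right _ _)) (sq_nonneg _)
  · rw [add_zero]
    exact mul_max_zero_mul_le_of_nonpos (not_lt.mp hv) (hnonpos j (not_lt.mp hv))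

section Network

variable {ι : Type*} [Fintype ι] {d k : ℕ} {x : ι → EuclideanSpace ℝ (Fin d)}
  {y lam : ι → ℝ} {s : ι → Fin k → ℝ} {w : Fin k → EuclideanSpace ℝ (Fin d)} {b v : Fin k → ℝ}
  {D p : ℝ}

lemma inner_add_eq_mul_kktPreact (hw : ∀ j, w j = ∑ i, (lam i * y i * v j * s i j) • x i)
    (hb : ∀ j, b j = ∑ i, lam i * y i * v j * s i j) (j : Fin k) (u : EuclideanSpace ℝ (Fin d)) :
    ⟪w j, u⟫_ℝ + b j = v j * kktPreact x y lam s j u := by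
  rw [hw j, hb j, sum_inner, ← sum_add_distrib, kktPreact, mul_sum]
  exact sum_congr rfl fun l _ => by rw [real_inner_smul_left]; ring

lemma net_eq_sum_kktPreact (hw : ∀ j, w j = ∑ i, (lam i * y i * v j * s i j) • x i)
    (hb : ∀ j, b j = ∑ i, lam i * y i * v j * s i j) (u : EuclideanSpace ℝ (Fin d)) :
    net w b v u = ∑ j, v j * max 0 (v j * kktPreact x y lam s j u) := by
  simp only [net, inner_add_eq_mul_kktPreact hw hb]

lemma net_le_sum_sq_mul_max_zero_kktPreact
    (hw : ∀ j, w j = ∑ i, (lam i * y i * v j * s i j) • x i)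
    (hb : ∀ j, b j = ∑ i, lam i * y i * v j * s i j) (u : EuclideanSpace ℝ (Fin d)) :
    net w b v u ≤ ∑ j ∈ univ.filter (0 < v ·), v j ^ 2 * max 0 (kktPreact x y lam s j u) := by
  rw [net_eq_sum_kktPreact hw hb, sum_filter]
  refine sum_le_sum fun j _ => ?_
  split_ifs with hv
  · exact (mul_max_zero_mul_of_pos hv _).le
  · exact mul_nonpos_of_nonpos_of_nonneg (not_lt.mp hv) (le_max_left _ _)

lemma one_le_sum_sq_mul_of_label_eq_one [DecidableEq ι]
    (hw : ∀ j, w j = ∑ i, (lam i * y i * v j * s i j) • x i)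
    (hb : ∀ j, b j = ∑ i, lam i * y i * v j * s i j) (hx : ∀ l, ⟪x l, x l⟫_ℝ = D) (hp0 : 0 ≤ p)
    (hp : ∀ l r, l ≠ r → |⟪x l, x r⟫_ℝ| ≤ p) (hy : ∀ l, |y l| = 1) (hlam : ∀ l, 0 ≤ lam l)
    (hs : ∀ l j, 0 ≤ s l j) {r : ι} (hyr : y r = 1) (hr : 1 ≤ net w b v (x r)) :
    1 ≤ ∑ j ∈ univ.filter (0 < v ·),
      v j ^ 2 * ((D + 1) * (lam r * s r j) + (p + 1) * dualMass lam s univ j) := by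
  refine hr.trans ((net_le_sum_sq_mul_max_zero_kktPreact hw hb _).trans
    (sum_le_sum fun j _ => mul_le_mul_of_nonneg_left (max_le ?_ ?_) (sq_nonneg _)))
  · have hD : 0 ≤ D := hx r ▸ real_inner_self_nonneg
    exact add_nonneg (mul_nonneg (by linarith) (mul_nonneg (hlam r) (hs r j)))
      (mul_nonneg (by linarith) (dualMass_nonneg hlam hs _ j))
  · have h := (abs_le.mp (abs_kktPreact_sub_le hx hp0 hp hy hlam hs r j)).2
    rw [hyr] at h
    linarith

lemma card_le_sum_sq_mul_dualMass [DecidableEq ι]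
    (hw : ∀ j, w j = ∑ i, (lam i * y i * v j * s i j) • x i)
    (hb : ∀ j, b j = ∑ i, lam i * y i * v j * s i j) (hx : ∀ l, ⟪x l, x l⟫_ℝ = D) (hp0 : 0 ≤ p)
    (hp : ∀ l r, l ≠ r → |⟪x l, x r⟫_ℝ| ≤ p) (hy : ∀ l, |y l| = 1) (hlam : ∀ l, 0 ≤ lam l)
    (hs : ∀ l j, 0 ≤ s l j) {I : Finset ι} (hI : ∀ r ∈ I, y r = 1 ∧ 1 ≤ net w b v (x r)) :
    (#I : ℝ) ≤ ∑ j ∈ univ.filter (0 < v ·),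
      v j ^ 2 * ((D + 1) * dualMass lam s I j + (p + 1) * #I * dualMass lam s univ j) := by
  calc (#I : ℝ) = ∑ r ∈ I, 1 := by rw [sum_const, nsmul_one]
    _ ≤ ∑ r ∈ I, ∑ j ∈ univ.filter (0 < v ·),
          v j ^ 2 * ((D + 1) * (lam r * s r j) + (p + 1) * dualMass lam s univ j) :=
        sum_le_sum fun r hr =>
          one_le_sum_sq_mul_of_label_eq_one hw hb hx hp0 hp hy hlam hs (hI r hr).1 (hI r hr).2
    _ = _ := by
        rw [sum_comm]
        refine sum_congr rfl fun j _ => ?_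
        rw [← mul_sum, sum_add_distrib, ← mul_sum, sum_const, nsmul_eq_mul]
        unfold dualMass
        ring

lemma two_le_sum_sq_mul_dualMass [DecidableEq ι]
    (hw : ∀ j, w j = ∑ i, (lam i * y i * v j * s i j) • x i)
    (hb : ∀ j, b j = ∑ i, lam i * y i * v j * s i j) (hx : ∀ l, ⟪x l, x l⟫_ℝ = D) (hp0 : 0 ≤ p)
    (hp : ∀ l r, l ≠ r → |⟪x l, x r⟫_ℝ| ≤ p) (hy : ∀ l, |y l| = 1) (hlam : ∀ l, 0 ≤ lam l)
    (hs : ∀ l j, 0 ≤ s l j) {I : Finset ι} (hI : ∀ r ∈ I, y r = 1 ∧ 1 ≤ net w b v (x r))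
    (hIne : I.Nonempty) {β : ℝ} (hβ : 2 * (D + 1) ≤ #I * β) :
    2 ≤ ∑ j ∈ univ.filter (0 < v ·),
      v j ^ 2 * (2 * (p + 1) * dualMass lam s univ j + β * dualMass lam s I j) := by
  have hcard : (0 : ℝ) < #I := by exact_mod_cast hIne.card_pos
  have hsum := card_le_sum_sq_mul_dualMass hw hb hx hp0 hp hy hlam hs hI
  refine le_of_mul_le_mul_left ?_ hcard
  calc (#I : ℝ) * 2 ≤ ∑ j ∈ univ.filter (0 < v ·), 2 *
        (v j ^ 2 * ((D + 1) * dualMass lam s I j + (p + 1) * #I * dualMass lam s univ j)) := by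
        rw [← mul_sum]; linarith
    _ ≤ _ := by
        rw [mul_sum]
        refine sum_le_sum fun j _ => ?_
        have hM := mul_nonneg (mul_nonneg (sq_nonneg (v j)) (dualMass_nonneg hlam hs I j))
          (sub_nonneg.mpr hβ)
        linear_combination hM

lemma max_zero_kktPreact_le [DecidableEq ι]
    (hw : ∀ j, w j = ∑ i, (lam i * y i * v j * s i j) • x i)
    (hb : ∀ j, b j = ∑ i, lam i * y i * v j * s i j) (hx : ∀ l, ⟪x l, x l⟫_ℝ = D) (hp0 : 0 ≤ p)
    (hp : ∀ l r, l ≠ r → |⟪x l, x r⟫_ℝ| ≤ p) (hy : ∀ l, |y l| = 1) (hlam : ∀ l, 0 ≤ lam l)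
    (hs : ∀ l j, 0 ≤ s l j) (hs0 : ∀ i j, ⟪w j, x i⟫_ℝ + b j < 0 → s i j = 0) (i : ι)
    {j : Fin k} (hv : 0 < v j) :
    max 0 (kktPreact x y lam s j (x i)) ≤
      kktPreact x y lam s j (x i) + (p + 1) * dualMass lam s univ j := by
  have hL := mul_nonneg (by linarith : 0 ≤ p + 1) (dualMass_nonneg hlam hs univ j)
  by_cases hsij : s i j = 0
  · have h := neg_le_kktPreact_of_mul_eq_zero hx hp0 hp hy hlam hs
      (by rw [hsij, mul_zero] : lam i * s i j = 0)
    exact max_le (by linarith) (by linarith)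
  · have h : 0 ≤ ⟪w j, x i⟫_ℝ + b j := not_lt.mp (mt (hs0 i j) hsij)
    rw [inner_add_eq_mul_kktPreact hw hb, mul_nonneg_iff_of_pos_left hv] at h
    rw [max_eq_right h]
    linarith

lemma one_le_net_add_smul_sum [DecidableEq ι]
    (hw : ∀ j, w j = ∑ i, (lam i * y i * v j * s i j) • x i)
    (hb : ∀ j, b j = ∑ i, lam i * y i * v j * s i j) (hx : ∀ l, ⟪x l, x l⟫_ℝ = D) (hp0 : 0 ≤ p)
    (hp : ∀ l r, l ≠ r → |⟪x l, x r⟫_ℝ| ≤ p) (hy : ∀ l, |y l| = 1) (hlam : ∀ l, 0 ≤ lam l)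
    (hs : ∀ l j, 0 ≤ s l j) (hs0 : ∀ i j, ⟪w j, x i⟫_ℝ + b j < 0 → s i j = 0)
    (hcomp : ∀ i, y i * net w b v (x i) ≠ 1 → lam i = 0) {I : Finset ι} {β η : ℝ} (hβ : 0 ≤ β)
    (hη : 0 ≤ η) (hηβ : 3 * (p + 1) + β ≤ η * (D - Fintype.card ι * p))
    (hgain : 2 ≤ ∑ j ∈ univ.filter (0 < v ·),
      v j ^ 2 * (2 * (p + 1) * dualMass lam s univ j + β * dualMass lam s I j))
    {i : ι} (hyi : y i = -1) :
    1 ≤ net w b v (x i + η • ∑ t, y t • x t) := by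
  rw [net_eq_sum_kktPreact hw hb]
  set T := fun j => kktPreact x y lam s j (x i)
  set T' := fun j => kktPreact x y lam s j (x i + η • ∑ t, y t • x t)
  set L := dualMass lam s univ
  set A := fun j => 2 * (p + 1) * L j + β * dualMass lam s I j
  have hL : ∀ j, 0 ≤ (p + 1) * L j := fun j =>
    mul_nonneg (by linarith) (dualMass_nonneg hlam hs univ j)
  have hA : ∀ j, 0 ≤ A j := fun j =>
    add_nonneg (by linarith [hL j]) (mul_nonneg hβ (dualMass_nonneg hlam hs I j))
  have hgrow : ∀ j, T j + (p + 1) * L j + A j ≤ T' j := fun j => by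
    have hI := mul_le_mul_of_nonneg_left (dualMass_le_dualMass_univ hlam hs I j) hβ
    have hηL := mul_le_mul_of_nonneg_right hηβ (dualMass_nonneg hlam hs univ j)
    linarith [le_kktPreact_add_smul_sum hx hp0 hp hy hlam hs hη j (x i)]
  by_cases hi : lam i = 0
  · have hfloor : ∀ j, -((p + 1) * L j) ≤ T j := fun j =>
      neg_le_kktPreact_of_mul_eq_zero hx hp0 hp hy hlam hs (by rw [hi, zero_mul])
    have h := sum_mul_max_zero_mul_add_le (v := v) (t := fun _ => 0) (t' := T') (A := A)
      (fun j _ => by rw [max_self, zero_add]; linarith [hgrow j, hfloor j])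
      (fun j _ => by linarith [hgrow j, hfloor j, hA j])
    simp only [mul_zero, max_self, sum_const_zero, zero_add] at h
    linarith
  · have hnet : net w b v (x i) = -1 := by
      have h : y i * net w b v (x i) = 1 := not_not.mp (mt (hcomp i) hi)
      rw [hyi] at h; linarith
    have h := sum_mul_max_zero_mul_add_le (v := v) (t := T) (t' := T') (A := A)
      (fun j hv => by
        linarith [hgrow j, max_zero_kktPreact_le hw hb hx hp0 hp hy hlam hs hs0 i hv])
      (fun j _ => by linarith [hgrow j, hL j, hA j])
    rw [← net_eq_sum_kktPreact hw hb, hnet] at h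
    linarith

end Network

theorem kkt_perturbation_flips_negative_general (d m k : ℕ)
    (x : Fin m → EuclideanSpace ℝ (Fin d)) (y : Fin m → ℝ)
    (w : Fin k → EuclideanSpace ℝ (Fin d)) (b v : Fin k → ℝ)
    (lam : Fin m → ℝ) (s : Fin m → Fin k → ℝ) (p : ℝ)
    (hy : ∀ i, y i = 1 ∨ y i = -1)
    (hx : ∀ i, ‖x i‖ = Real.sqrt d)
    (hp0 : 0 ≤ p)
    (hp : ∀ i j, i ≠ j → |⟪x i, x j⟫_ℝ| ≤ p)
    (hlam : ∀ i, 0 ≤ lam i)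
    (hs01 : ∀ i j, s i j ∈ Set.Icc (0 : ℝ) 1)
    (hmargin : ∀ i, 1 ≤ y i * net w b v (x i))
    (hcomp : ∀ i, y i * net w b v (x i) ≠ 1 → lam i = 0)
    (hs0 : ∀ i j, ⟪w j, x i⟫_ℝ + b j < 0 → s i j = 0)
    (hw : ∀ j, w j = ∑ i, (lam i * y i * v j * s i j) • x i)
    (hb : ∀ j, b j = ∑ i, lam i * y i * v j * s i j)
    (hmp : (m : ℝ) * (p + 1) ≤ ((d : ℝ) + 1) / 3)
    (c : ℝ) (hc0 : 0 < c)
    (hcp : c * m ≤ ((Finset.univ.filter fun i => y i = 1).card : ℝ))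
    (η₁ η₂ : ℝ)
    (hη₁ : η₁ = (p + 1) / ((d : ℝ) - (m : ℝ) * p))
    (hη₂ : η₂ = 2 * (c * ((m : ℝ) * (p + 1) / ((d : ℝ) + 1)) + 1) * ((d : ℝ) + 1) /
      ((m : ℝ) * c * ((d : ℝ) - (m : ℝ) * p))) :
    ∀ i, y i = -1 → 1 ≤ net w b v (x i + (η₁ + η₂) • ∑ l, y l • x l) := by
  intro i hyi
  have hm : (1 : ℝ) ≤ m := by exact_mod_cast i.pos
  have hD : 0 < (d : ℝ) - m * p := by nlinarith
  have hcm : 0 < c * m := by positivity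
  have hyabs : ∀ l, |y l| = 1 := fun l => by rcases hy l with h | h <;> simp [h]
  have hxx : ∀ l, ⟪x l, x l⟫_ℝ = d := fun l => by
    rw [real_inner_self_eq_norm_sq, hx l, Real.sq_sqrt (Nat.cast_nonneg d)]
  have hs : ∀ l j, 0 ≤ s l j := fun l j => (hs01 l j).1
  have hηβ : (η₁ + η₂) * (d - m * p) = 3 * (p + 1) + 2 * (d + 1) / (c * m) := by
    have hD' := hD.ne'
    rw [hη₁, hη₂, add_mul, div_mul_cancel₀ _ hD', ← div_div, div_mul_cancel₀ _ hD']
    field_simp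
    ring
  have hη : 0 ≤ η₁ + η₂ := le_of_mul_le_mul_right (by rw [zero_mul, hηβ]; positivity) hD
  have hβ : 2 * ((d : ℝ) + 1) ≤ #(univ.filter fun l => y l = 1) * (2 * (d + 1) / (c * m)) :=
    calc 2 * ((d : ℝ) + 1) = c * m * (2 * (d + 1) / (c * m)) := by field_simp
      _ ≤ _ := mul_le_mul_of_nonneg_right hcp (by positivity)
  have hgain := two_le_sum_sq_mul_dualMass hw hb hxx hp0 hp hyabs hlam hs
    (fun r hr => ⟨(mem_filter.mp hr).2, by simpa [(mem_filter.mp hr).2] using hmargin r⟩)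
    (card_pos.mp (by exact_mod_cast hcm.trans_le hcp)) hβ
  exact one_le_net_add_smul_sum hw hb hxx hp0 hp hyabs hlam hs hs0 hcomp (by positivity) hη
    (by rw [Fintype.card_fin, hηβ]) hgain hyi

/-- under the KKT conditions, if `m(p+1) ≤ (d+1)/3`, both labels
occur, and each label makes up a `c`-fraction of the data, then with
`c' := m(p+1)/(d+1)`, `η₁ := (p+1)/(d-mp)`, `η₂ := 2(cc'+1)(d+1)/(mc(d-mp))` and
`z := (η₁+η₂) ∑ₗ yₗ xₗ`, every negatively labeled example satisfies
`N_θ(xᵢ + z) ≥ 1`. -/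
theorem kkt_perturbation_flips_negative (d m k : ℕ)
    (x : Fin m → EuclideanSpace ℝ (Fin d)) (y : Fin m → ℝ)
    (w : Fin k → EuclideanSpace ℝ (Fin d)) (b v : Fin k → ℝ)
    (lam : Fin m → ℝ) (s : Fin m → Fin k → ℝ) (p : ℝ)
    (hy : ∀ i, y i = 1 ∨ y i = -1)
    (hx : ∀ i, ‖x i‖ = Real.sqrt d)
    (hp0 : 0 ≤ p)
    (hp : ∀ i j, i ≠ j → |⟪x i, x j⟫_ℝ| ≤ p)
    (hlam : ∀ i, 0 ≤ lam i)
    (hs01 : ∀ i j, s i j ∈ Set.Icc (0 : ℝ) 1)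
    (hmargin : ∀ i, 1 ≤ y i * net w b v (x i))
    (hcomp : ∀ i, y i * net w b v (x i) ≠ 1 → lam i = 0)
    (hs1 : ∀ i j, 0 < ⟪w j, x i⟫_ℝ + b j → s i j = 1)
    (hs0 : ∀ i j, ⟪w j, x i⟫_ℝ + b j < 0 → s i j = 0)
    (hw : ∀ j, w j = ∑ i, (lam i * y i * v j * s i j) • x i)
    (hb : ∀ j, b j = ∑ i, lam i * y i * v j * s i j)
    (hmp : (m : ℝ) * (p + 1) ≤ ((d : ℝ) + 1) / 3)
    (hIp : ∃ i, y i = 1) (hIm : ∃ i, y i = -1)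
    (c : ℝ) (hc0 : 0 < c) (hc1 : c ≤ 1)
    (hcp : c * m ≤ ((Finset.univ.filter fun i => y i = 1).card : ℝ))
    (hcm : c * m ≤ ((Finset.univ.filter fun i => y i = -1).card : ℝ))
    (η₁ η₂ : ℝ)
    (hη₁ : η₁ = (p + 1) / ((d : ℝ) - (m : ℝ) * p))
    (hη₂ : η₂ = 2 * (c * ((m : ℝ) * (p + 1) / ((d : ℝ) + 1)) + 1) * ((d : ℝ) + 1) /
      ((m : ℝ) * c * ((d : ℝ) - (m : ℝ) * p))) :
    ∀ i, y i = -1 → 1 ≤ net w b v (x i + (η₁ + η₂) • ∑ l, y l • x l) :=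
  kkt_perturbation_flips_negative_general d m k x y w b v lam s p hy hx hp0 hp hlam hs01 hmargin
    hcomp hs0 hw hb hmp c hc0 hcp η₁ η₂ hη₁ hη₂
end

section
/- Let d ≥ 1, let {(x_i, y_i)}_{i=1}^m ⊆ ℝ^d × {−1,1} with ‖x_i‖ = √d for every i ∈ [m], let p := max_{i≠j} |⟨x_i, x_j⟩|, and assume m·(p+1) ≤ (d+1)/3. Let c ∈ (0,1], set c' := m(p+1)/(d+1), η₁ := (p+1)/(d − m·p), η₂ := 2(c·c'+1)(d+1)/(m·c·(d − m·p)), and z := (η₁ + η₂) · Σ_{l=1}^m y_l x_l. Then ‖z‖ ≤ 18·√(2d)/(c·√m). -/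
open InnerProductSpace Finset

/-- for a dataset of points of norm `√d` with pairwise inner
products at most `p` in absolute value and `m(p+1) ≤ (d+1)/3`, the perturbation
`z := (η₁+η₂) ∑ₗ yₗ xₗ` (with `η₁ := (p+1)/(d-mp)` and
`η₂ := 2(cc'+1)(d+1)/(mc(d-mp))`, `c' := m(p+1)/(d+1)`) has norm at most
`18√(2d)/(c√m)`. -/
theorem perturbation_norm_bound (d m : ℕ) (hd : 1 ≤ d)
    (x : Fin m → EuclideanSpace ℝ (Fin d)) (y : Fin m → ℝ)
    (hy : ∀ i, y i = 1 ∨ y i = -1)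
    (hx : ∀ i, ‖x i‖ = Real.sqrt d)
    (p : ℝ) (hp0 : 0 ≤ p)
    (hp : ∀ i j, i ≠ j → |⟪x i, x j⟫_ℝ| ≤ p)
    (hmp : (m : ℝ) * (p + 1) ≤ ((d : ℝ) + 1) / 3)
    (c : ℝ) (hc0 : 0 < c) (hc1 : c ≤ 1)
    (η₁ η₂ : ℝ)
    (hη₁ : η₁ = (p + 1) / ((d : ℝ) - (m : ℝ) * p))
    (hη₂ : η₂ = 2 * (c * ((m : ℝ) * (p + 1) / ((d : ℝ) + 1)) + 1) * ((d : ℝ) + 1) /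
      ((m : ℝ) * c * ((d : ℝ) - (m : ℝ) * p))) :
    ‖(η₁ + η₂) • ∑ l, y l • x l‖ ≤ 18 * Real.sqrt (2 * d) / (c * Real.sqrt m) := by
  rcases Nat.eq_zero_or_pos m with hm | hm
  · subst hm
    simp
  have hm1 : (1:ℝ) ≤ (m:ℝ) := by exact_mod_cast hm
  have hd1 : (1:ℝ) ≤ (d:ℝ) := by exact_mod_cast hd
  -- A := d - m*p
  have hA6 : ((d:ℝ) + 1) / 6 ≤ (d:ℝ) - (m:ℝ) * p := by nlinarith
  have hA : (0:ℝ) < (d:ℝ) - (m:ℝ) * p := by nlinarith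
  have hcm : (0:ℝ) < c * (m:ℝ) := by positivity
  -- bound η₁
  have hη₁le : η₁ ≤ 2 / (c * (m:ℝ)) := by
    rw [hη₁, div_le_div_iff₀ hA hcm]
    nlinarith [mul_le_mul_of_nonneg_right hc1 (by positivity : (0:ℝ) ≤ (p+1)*(m:ℝ))]
  have hη₁0 : 0 ≤ η₁ := by
    rw [hη₁]; positivity -- may fail: denom sign unknown
  -- bound η₂
  have hL0 : (0:ℝ) ≤ c * ((m:ℝ) * (p + 1) / ((d:ℝ) + 1)) := by positivity
  have hL : c * ((m:ℝ) * (p + 1) / ((d:ℝ) + 1)) ≤ 1/3 := by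
    have h1 : (m:ℝ) * (p + 1) / ((d:ℝ) + 1) ≤ 1/3 := by
      rw [div_le_div_iff₀ (by positivity) (by norm_num : (0:ℝ) < 3)] at *
      nlinarith
    nlinarith
  have hη₂le : η₂ ≤ 16 / (c * (m:ℝ)) := by
    rw [hη₂, div_le_div_iff₀ (by positivity) hcm]
    nlinarith [mul_le_mul hL hA6 (by positivity) (by norm_num : (0:ℝ) ≤ 1/3),
      mul_pos hcm (by positivity : (0:ℝ) < (d:ℝ)+1),
      mul_le_mul_of_nonneg_right hL (le_of_lt (mul_pos hcm (by positivity : (0:ℝ) < (d:ℝ)+1))),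
      mul_le_mul_of_nonneg_right hA6 (le_of_lt hcm)]
  have hη₂0 : 0 ≤ η₂ := by
    rw [hη₂]
    apply div_nonneg
    · positivity
    · positivity
  -- norm of the sum
  set v := ∑ l, y l • x l with hv
  have hvsq : ‖v‖ ^ 2 = ∑ l, ∑ k, y l * (y k * ⟪x l, x k⟫_ℝ) := by
    rw [← real_inner_self_eq_norm_sq, hv, sum_inner]
    refine Finset.sum_congr rfl fun l _ => ?_
    rw [real_inner_smul_left, inner_sum, Finset.mul_sum]
    refine Finset.sum_congr rfl fun k _ => ?_
    rw [real_inner_smul_right]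
  have hterm : ∀ l k : Fin m, y l * (y k * ⟪x l, x k⟫_ℝ) ≤ if l = k then (d:ℝ) else p := by
    intro l k
    by_cases h : l = k
    · subst h
      simp only [if_pos rfl]
      have : ⟪x l, x l⟫_ℝ = (d:ℝ) := by
        rw [real_inner_self_eq_norm_sq, hx l, Real.sq_sqrt (by positivity)]
      rw [this]
      rcases hy l with h | h <;> rw [h] <;> norm_num
    · simp only [if_neg h]
      have h1 := hp l k h
      have hyl : |y l| = 1 := by rcases hy l with h' | h' <;> simp [h']
      have hyk : |y k| = 1 := by rcases hy k with h' | h' <;> simp [h']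
      have h2 : |y l * (y k * ⟪x l, x k⟫_ℝ)| ≤ p := by
        rw [abs_mul, abs_mul, hyl, hyk, one_mul, one_mul]; exact h1
      exact le_trans (le_abs_self _) h2
  have hvle : ‖v‖ ^ 2 ≤ (m:ℝ) * ((d:ℝ) - p + (m:ℝ) * p) := by
    rw [hvsq]
    calc ∑ l, ∑ k, y l * (y k * ⟪x l, x k⟫_ℝ)
        ≤ ∑ l : Fin m, ∑ k : Fin m, (if l = k then (d:ℝ) else p) := by
          apply Finset.sum_le_sum; intro l _
          apply Finset.sum_le_sum; intro k _
          exact hterm l k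
      _ = (m:ℝ) * ((d:ℝ) - p + (m:ℝ) * p) := by
          have : ∀ l : Fin m, ∑ k : Fin m, (if l = k then (d:ℝ) else p)
              = ((d:ℝ) - p) + (m:ℝ) * p := by
            intro l
            have : ∀ k : Fin m, (if l = k then (d:ℝ) else p)
                = (if l = k then ((d:ℝ) - p) else 0) + p := by
              intro k; split_ifs <;> ring
            simp [this, Finset.sum_add_distrib, Finset.sum_ite_eq, Finset.card_univ,
              mul_comm]
          simp [this, Finset.sum_const, Finset.card_univ]
          ring
  have hv2 : ‖v‖ ^ 2 ≤ 2 * (m:ℝ) * (d:ℝ) := by nlinarith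
  have hvnorm : ‖v‖ ≤ Real.sqrt (2 * (m:ℝ) * (d:ℝ)) := by
    rw [show (2 * (m:ℝ) * (d:ℝ)) = ‖v‖^2 + (2*(m:ℝ)*(d:ℝ) - ‖v‖^2) by ring]
    calc ‖v‖ = Real.sqrt (‖v‖^2) := by
          rw [Real.sqrt_sq (norm_nonneg v)]
      _ ≤ _ := Real.sqrt_le_sqrt (by linarith)
  have hsm : Real.sqrt m * Real.sqrt m = (m:ℝ) := Real.mul_self_sqrt (by positivity)
  have hsm0 : 0 < Real.sqrt m := Real.sqrt_pos.mpr (by positivity)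
  have hsum18 : η₁ + η₂ ≤ 18 / (c * (m:ℝ)) := by
    rw [show (18:ℝ)/(c*(m:ℝ)) = 2/(c*(m:ℝ)) + 16/(c*(m:ℝ)) by ring]
    exact add_le_add hη₁le hη₂le
  calc ‖(η₁ + η₂) • v‖ = (η₁ + η₂) * ‖v‖ := by
        rw [norm_smul, Real.norm_eq_abs, abs_of_nonneg (by linarith)]
    _ ≤ (18 / (c * (m:ℝ))) * Real.sqrt (2 * (m:ℝ) * (d:ℝ)) := by
        apply mul_le_mul hsum18 hvnorm (norm_nonneg v) (by positivity)
    _ = 18 * Real.sqrt (2 * d) / (c * Real.sqrt m) := by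
        rw [show 2 * (m:ℝ) * (d:ℝ) = (m:ℝ) * (2 * d) by ring,
          Real.sqrt_mul (by positivity)]
        rw [div_mul_eq_mul_div, div_eq_div_iff (by positivity) (by positivity)]
        linear_combination (18 * c * Real.sqrt (2*(d:ℝ))) * hsm
end

section
/- Let d ≥ 2 be an even integer. For j ∈ [d], let x_j := √d · e_j where e_1, …, e_d are the standard basis vectors of ℝ^d, and let y_j := 1 for 1 ≤ j ≤ d/2 and y_j := −1 for d/2 < j ≤ d. Define the depth-2 ReLU network N'(x) := Σ_{j=1}^d y_j · max(0, ⟨x_j, x⟩ / d) and the vector z := (4/d) · Σ_{j=d/2+1}^d x_j. Then: (a) N'(x_i) = y_i for every i ∈ [d]; (b) ‖z‖ = 2√2; and (c) N'(x_i + z) = −1 for every i with 1 ≤ i ≤ d/2. -/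
open InnerProductSpace Finset

/-- the simple example. For even `d`, the dataset `xⱼ = √d eⱼ`
with labels `yⱼ = 1` for the first half and `yⱼ = -1` for the second half, and
the bias-free network `N'(x) = ∑ⱼ yⱼ max(0, ⟪xⱼ, x⟫/d)`: the network classifies
the data with `N'(xᵢ) = yᵢ`, and the perturbation `z = (4/d) ∑_{j > d/2} xⱼ`,
of norm `2√2`, satisfies `N'(xᵢ + z) = -1` for every `i` in the first half. -/
theorem simple_example_nonrobust (d : ℕ) (hd2 : 2 ≤ d) (hde : Even d)
    (x : Fin d → EuclideanSpace ℝ (Fin d))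
    (hx : ∀ j, x j = Real.sqrt d • EuclideanSpace.single j 1)
    (y : Fin d → ℝ)
    (hy : ∀ j, y j = if (j : ℕ) < d / 2 then 1 else -1)
    (N' : EuclideanSpace ℝ (Fin d) → ℝ)
    (hN : ∀ u, N' u = ∑ j, y j * max 0 (⟪x j, u⟫_ℝ / d))
    (z : EuclideanSpace ℝ (Fin d))
    (hz : z = (4 / (d : ℝ)) • ∑ j ∈ Finset.univ.filter fun j : Fin d => d / 2 ≤ (j : ℕ), x j) :
    (∀ i, N' (x i) = y i) ∧
    ‖z‖ = 2 * Real.sqrt 2 ∧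
    (∀ i : Fin d, (i : ℕ) < d / 2 → N' (x i + z) = -1) := by
  have hd0 : (0:ℝ) < (d:ℝ) := by positivity
  have hdne : (d:ℝ) ≠ 0 := ne_of_gt hd0
  have hsd : Real.sqrt d * Real.sqrt d = (d:ℝ) := Real.mul_self_sqrt (le_of_lt hd0)
  -- inner products of the data points
  have hinner : ∀ j i : Fin d, ⟪x j, x i⟫_ℝ = if j = i then (d:ℝ) else 0 := by
    intro j i
    rw [hx j, hx i]
    rw [real_inner_smul_left, real_inner_smul_right]
    rw [EuclideanSpace.inner_single_left, EuclideanSpace.single_apply]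
    by_cases h : j = i <;> simp [h, hsd]
  -- the half-space filter
  have hm : d / 2 < d := Nat.div_lt_self (by omega) (by norm_num)
  have hfilter : (Finset.univ.filter fun j : Fin d => d / 2 ≤ (j : ℕ)) =
      Finset.Ici (⟨d / 2, hm⟩ : Fin d) := by
    ext j; simp [Finset.mem_Ici, Fin.le_def]
  have hcard : (Finset.univ.filter fun j : Fin d => d / 2 ≤ (j : ℕ)).card = d / 2 := by
    rw [hfilter, Fin.card_Ici]
    have he : d % 2 = 0 := Nat.even_iff.mp hde
    show d - d / 2 = d / 2
    omega
  -- inner product with z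
  have hinnerz : ∀ j : Fin d, ⟪x j, z⟫_ℝ = if d / 2 ≤ (j : ℕ) then 4 else 0 := by
    intro j
    rw [hz, real_inner_smul_right, inner_sum]
    simp only [hinner]
    rw [Finset.sum_ite_eq _ j fun _ => (d:ℝ)]
    by_cases h : d / 2 ≤ (j : ℕ)
    · simp only [Finset.mem_filter, Finset.mem_univ, true_and, h, if_true]
      field_simp
    · simp [h]
  refine ⟨?_, ?_, ?_⟩
  · -- (a)
    intro i
    rw [hN]
    have : ∀ j : Fin d, y j * max 0 (⟪x j, x i⟫_ℝ / d) = if j = i then y i else 0 := by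
      intro j
      rw [hinner]
      by_cases h : j = i
      · subst h
        simp [div_self hdne]
      · simp [h]
    rw [Finset.sum_congr rfl fun j _ => this j, Finset.sum_ite_eq' _ i fun _ => y i]
    simp
  · -- (b)
    have hzz : ⟪z, z⟫_ℝ = 8 := by
      nth_rewrite 2 [hz]
      rw [real_inner_smul_right, inner_sum]
      have : ∀ j ∈ (Finset.univ.filter fun j : Fin d => d / 2 ≤ (j : ℕ)),
          ⟪z, x j⟫_ℝ = 4 := by
        intro j hj
        rw [real_inner_comm, hinnerz]
        simp only [Finset.mem_filter] at hj
        simp [hj.2]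
      rw [Finset.sum_congr rfl this, Finset.sum_const, hcard, nsmul_eq_mul]
      have h2 : ((d / 2 : ℕ) : ℝ) = (d:ℝ) / 2 := by
        obtain ⟨k, hk⟩ := hde
        subst hk
        have hk2 : (k + k) / 2 = k := by omega
        rw [hk2]; push_cast; ring
      rw [h2]
      field_simp
      ring
    have : ‖z‖ ^ 2 = 8 := by
      rw [← real_inner_self_eq_norm_sq, hzz]
    have h8 : (8:ℝ) = (2 * Real.sqrt 2) ^ 2 := by
      rw [mul_pow, Real.sq_sqrt (by norm_num : (2:ℝ) ≥ 0)]
      norm_num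
    nlinarith [norm_nonneg z, Real.sqrt_nonneg 2, Real.sq_sqrt (by norm_num : (0:ℝ) ≤ 2)]
  · -- (c)
    intro i hi
    rw [hN]
    have hterm : ∀ j : Fin d, y j * max 0 (⟪x j, x i + z⟫_ℝ / d) =
        if j = i then 1 else if d / 2 ≤ (j : ℕ) then -(4 / (d:ℝ)) else 0 := by
      intro j
      rw [inner_add_right, hinner, hinnerz, hy]
      by_cases h : j = i
      · subst h
        have : ¬ d / 2 ≤ (j : ℕ) := by omega
        simp only [if_pos rfl, this, if_false, add_zero, hi, if_true]
        rw [div_self hdne]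
        norm_num
      · rw [if_neg h]
        by_cases h2 : d / 2 ≤ (j : ℕ)
        · have : ¬ (j : ℕ) < d / 2 := by omega
          simp only [h2, if_true, this, if_false, if_neg h, zero_add]
          rw [max_eq_right (by positivity)]
          ring
        · have : (j : ℕ) < d / 2 := by omega
          simp [h, h2, this]
    rw [Finset.sum_congr rfl fun j _ => hterm j]
    set g : Fin d → ℝ := fun j => if d / 2 ≤ (j : ℕ) then -(4 / (d:ℝ)) else 0 with hg
    have hgi : g i = 0 := by simp only [hg]; rw [if_neg (by omega)]
    have hsum : ∑ j, (if j = i then (1:ℝ) else g j)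
        = 1 + ∑ j ∈ Finset.univ.erase i, g j := by
      rw [← Finset.add_sum_erase _ _ (Finset.mem_univ i), if_pos rfl]
      congr 1
      refine Finset.sum_congr rfl fun j hj => ?_
      rw [if_neg (Finset.ne_of_mem_erase hj)]
    have hsume : ∑ j ∈ Finset.univ.erase i, g j = ∑ j, g j := by
      rw [← Finset.add_sum_erase _ g (Finset.mem_univ i), hgi, zero_add]
    have hsumg : ∑ j, g j = -2 := by
      simp only [hg]
      rw [Finset.sum_ite, Finset.sum_const, Finset.sum_const_zero, add_zero,
        hcard, nsmul_eq_mul]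
      have h2 : ((d / 2 : ℕ) : ℝ) = (d:ℝ) / 2 := by
        obtain ⟨k, hk⟩ := hde
        subst hk
        have hk2 : (k + k) / 2 = k := by omega
        rw [hk2]; push_cast; ring
      rw [h2]
      field_simp
      ring
    rw [hsum, hsume, hsumg]
    norm_num
end
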